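/- For erasure probability ε = 0, the feedback capacity expression equals the logarithm of the golden ratio: max over p ∈ [0,1/2] of H_b(p)/(p + 1) = log₂((1 + √5)/2), and the maximum is attained at p = (3 - √5)/2. -/

import Mathlib

/-- Binary entropy function (base 2), with the convention `0 * log 0 = 0`. -/
noncomputable def Hb (p : ℝ) : ℝ := -p * Real.logb 2 p - (1 - p) * Real.logb 2 (1 - p)

lemma gibbs_aux (q s : ℝ) (hq0 : 0 < q) (hq1 : q < 1) (hs0 : 0 < s) (hs1 : s < 1) :
    -q * Real.log q - (1 - q) * Real.log (1 - q)
      ≤ -q * Real.log s - (1 - q) * Real.log (1 - s) := by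
  have hq1' : (0:ℝ) < 1 - q := by linarith
  have h1 : Real.log (s / q) ≤ s / q - 1 := Real.log_le_sub_one_of_pos (div_pos hs0 hq0)
  have h2 : Real.log ((1 - s) / (1 - q)) ≤ (1 - s) / (1 - q) - 1 :=
    Real.log_le_sub_one_of_pos (div_pos (by linarith) hq1')
  rw [Real.log_div (ne_of_gt hs0) (ne_of_gt hq0)] at h1
  rw [Real.log_div (by linarith) (ne_of_gt hq1')] at h2
  have h1' := mul_le_mul_of_nonneg_left h1 hq0.le
  have h2' := mul_le_mul_of_nonneg_left h2 hq1'.le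
  have e1 : q * (s / q - 1) = s - q := by field_simp
  have e2 : (1 - q) * ((1 - s) / (1 - q) - 1) = q - s := by field_simp; ring
  rw [e1] at h1'
  rw [e2] at h2'
  nlinarith [h1', h2']

theorem capacity_at_zero_erasure :
    ((3 - Real.sqrt 5) / 2 ∈ Set.Icc (0 : ℝ) (1 / 2)) ∧
    (∀ q ∈ Set.Icc (0 : ℝ) (1 / 2),
      Hb q / (q + 1) ≤ Hb ((3 - Real.sqrt 5) / 2) / ((3 - Real.sqrt 5) / 2 + 1)) ∧
    Hb ((3 - Real.sqrt 5) / 2) / ((3 - Real.sqrt 5) / 2 + 1)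
      = Real.logb 2 ((1 + Real.sqrt 5) / 2) := by
  set s : ℝ := (3 - Real.sqrt 5) / 2 with hs_def
  set φ : ℝ := (1 + Real.sqrt 5) / 2 with hφ_def
  have h5 : Real.sqrt 5 ^ 2 = 5 := Real.sq_sqrt (by norm_num)
  have h5nn : (0:ℝ) ≤ Real.sqrt 5 := Real.sqrt_nonneg 5
  have h5lt : Real.sqrt 5 < 3 := by nlinarith
  have h5gt : 2 < Real.sqrt 5 := by nlinarith
  have hs0 : 0 < s := by rw [hs_def]; linarith
  have hs1 : s < 1/2 := by rw [hs_def]; linarith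
  have hφ1 : 1 < φ := by rw [hφ_def]; linarith
  have hφ0 : 0 < φ := by linarith
  -- key algebraic identities
  have key1 : s * φ ^ 2 = 1 := by rw [hs_def, hφ_def]; nlinarith
  have key2 : (1 - s) * φ = 1 := by rw [hs_def, hφ_def]; nlinarith
  have hseq : s = (φ ^ 2)⁻¹ := by
    field_simp
    linarith [key1]
  have h1seq : 1 - s = φ⁻¹ := by
    field_simp
    linarith [key2]
  have hlogs : Real.log s = -(2 * Real.log φ) := by
    rw [hseq, Real.log_inv, Real.log_pow]; push_cast; ring
  have hlog1s : Real.log (1 - s) = -Real.log φ := by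
    rw [h1seq, Real.log_inv]
  have hlog2 : (0:ℝ) < Real.log 2 := Real.log_pos (by norm_num)
  -- logb versions
  have hlbs : Real.logb 2 s = -(2 * Real.logb 2 φ) := by
    simp only [Real.logb, hlogs]; ring
  have hlb1s : Real.logb 2 (1 - s) = -Real.logb 2 φ := by
    simp only [Real.logb, hlog1s]; ring
  -- value at s
  have hHbs : Hb s = (s + 1) * Real.logb 2 φ := by
    rw [Hb, hlbs, hlb1s]; ring
  have hval : Hb s / (s + 1) = Real.logb 2 φ := by
    rw [hHbs]; exact mul_div_cancel_left₀ _ (ne_of_gt (by linarith))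
  refine ⟨⟨hs0.le, hs1.le⟩, ?_, hval⟩
  intro q hq
  rw [hval]
  obtain ⟨hq0, hq12⟩ := hq
  rcases eq_or_lt_of_le hq0 with h0 | h0
  · -- q = 0
    have : Hb q = 0 := by rw [← h0, Hb]; simp
    rw [this, zero_div]
    exact Real.logb_nonneg (by norm_num) hφ1.le
  · have hq1 : q < 1 := by linarith
    have hg := gibbs_aux q s h0 hq1 hs0 (by linarith)
    have hnat : -q * Real.log s - (1 - q) * Real.log (1 - s) = (q + 1) * Real.log φ := by
      rw [hlogs, hlog1s]; ring
    rw [hnat] at hg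
    have hHbq : Hb q = (-q * Real.log q - (1 - q) * Real.log (1 - q)) / Real.log 2 := by
      rw [Hb, Real.logb, Real.logb]; ring
    rw [div_le_iff₀ (by linarith), hHbq, Real.logb]
    rw [div_le_iff₀ hlog2] at *
    calc -q * Real.log q - (1 - q) * Real.log (1 - q) ≤ (q + 1) * Real.log φ := hg
      _ = Real.log φ / Real.log 2 * (q + 1) * Real.log 2 := by
          field_simp
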